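/- (Two-variable difference equations.) For every integer n ≥ 1 and all x, y ∈ ℂ: (i) Σ_{k=0}^{n} [n choose k]_q ((−1;q)_{n−k}/2^{n−k}) B_{k,q}(x,y) − B_{n,q}(x,y) = [n]_q (x ⊕_q y)^{n−1}; (ii) Σ_{k=0}^{n} [n choose k]_q ((−1;q)_{n−k}/2^{n−k}) E_{k,q}(x,y) + E_{n,q}(x,y) = 2 (x ⊕_q y)^n; (iii) Σ_{k=0}^{n} [n choose k]_q ((−1;q)_{n−k}/2^{n−k}) G_{k,q}(x,y) + G_{n,q}(x,y) = 2 [n]_q (x ⊕_q y)^{n−1}. -/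

import Mathlib

open Finset PowerSeries

/-- The `q`-number `[n]_q = (1 - q^n)/(1 - q)`. -/
noncomputable def qNum (q : ℂ) (n : ℕ) : ℂ := (1 - q ^ n) / (1 - q)

/-- The `q`-factorial `[n]_q!`. -/
noncomputable def qFact (q : ℂ) : ℕ → ℂ
  | 0 => 1
  | n + 1 => qNum q (n + 1) * qFact q n

/-- The `q`-shifted factorial `(a; q)_n = ∏_{j=0}^{n-1} (1 - q^j a)`. -/
noncomputable def qShift (a q : ℂ) (n : ℕ) : ℂ := ∏ j ∈ Finset.range n, (1 - q ^ j * a)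

/-- The Gaussian binomial coefficient `[n choose k]_q = (q;q)_n / ((q;q)_{n-k} (q;q)_k)`. -/
noncomputable def qBinom (q : ℂ) (n k : ℕ) : ℂ :=
  qShift q q n / (qShift q q (n - k) * qShift q q k)

/-- The formal power series (in `t`) `𝓔_q(tx) = Σ_{n≥0} (-1;q)_n (x)^n t^n / (2^n [n]_q!)`. -/
noncomputable def qExp (q x : ℂ) : PowerSeries ℂ :=
  PowerSeries.mk fun n => qShift (-1) q n * x ^ n / (2 ^ n * qFact q n)

/-- The generating series `Σ_{n≥0} a_n t^n / [n]_q!` of a sequence `a`. -/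
noncomputable def qGen (q : ℂ) (a : ℕ → ℂ) : PowerSeries ℂ :=
  PowerSeries.mk fun n => a n / qFact q n

/-- The `q`-addition `(x ⊕_q y)^n`. -/
noncomputable def qAdd (q x y : ℂ) (n : ℕ) : ℂ :=
  ∑ k ∈ Finset.range (n + 1),
    qBinom q n k * (qShift (-1) q k * qShift (-1) q (n - k) / 2 ^ n) * x ^ k * y ^ (n - k)


lemma one_sub_pow_ne {q : ℂ} (hq1 : ‖q‖ < 1) (m : ℕ) :
    (1 : ℂ) - q ^ (m + 1) ≠ 0 := by
  intro h
  have h1 : q ^ (m + 1) = 1 := by linear_combination -h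
  have : ‖q ^ (m + 1)‖ < 1 := by
    rw [norm_pow]
    exact pow_lt_one₀ (norm_nonneg q) hq1 (Nat.succ_ne_zero m)
  rw [h1] at this; simp at this

lemma qNum_ne {q : ℂ} (hq1 : ‖q‖ < 1) (m : ℕ) : qNum q (m + 1) ≠ 0 := by
  have h0 : (1 : ℂ) - q ≠ 0 := by simpa using one_sub_pow_ne hq1 0
  exact div_ne_zero (one_sub_pow_ne hq1 m) h0

lemma qFact_ne {q : ℂ} (hq1 : ‖q‖ < 1) : ∀ n, qFact q n ≠ 0
  | 0 => one_ne_zero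
  | n + 1 => mul_ne_zero (qNum_ne hq1 n) (qFact_ne hq1 n)

lemma qShift_qq {q : ℂ} (hq1 : ‖q‖ < 1) (n : ℕ) :
    qShift q q n = (1 - q) ^ n * qFact q n := by
  induction n with
  | zero => simp [qShift, qFact]
  | succ m ih =>
    have h0 : (1 : ℂ) - q ≠ 0 := by simpa using one_sub_pow_ne hq1 0
    rw [qShift, Finset.prod_range_succ, ← qShift, ih,
      show qFact q (m + 1) = qNum q (m + 1) * qFact q m from rfl, qNum]
    field_simp
    ring

lemma qBinom_eq {q : ℂ} (hq1 : ‖q‖ < 1) {n k : ℕ} (hk : k ≤ n) :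
    qBinom q n k = qFact q n / (qFact q k * qFact q (n - k)) := by
  have h0 : (1 : ℂ) - q ≠ 0 := by simpa using one_sub_pow_ne hq1 0
  have hp : (1 - q : ℂ) ^ n ≠ 0 := pow_ne_zero _ h0
  rw [qBinom, qShift_qq hq1, qShift_qq hq1, qShift_qq hq1]
  rw [show (1-q:ℂ)^(n-k) * qFact q (n-k) * ((1-q)^k * qFact q k)
      = (1-q)^n * (qFact q k * qFact q (n-k)) by
    rw [show ((1-q:ℂ))^n = (1-q)^(n-k) * (1-q)^k by rw [← pow_add, Nat.sub_add_cancel hk]]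
    ring]
  rw [mul_div_mul_left _ _ hp]

lemma coeff_genmul {q : ℂ} (hq1 : ‖q‖ < 1) (a : ℕ → ℂ) (n : ℕ) :
    coeff n (qGen q a * qExp q 1)
      = (∑ k ∈ Finset.range (n+1),
          qBinom q n k * (qShift (-1) q (n-k) / 2^(n-k)) * a k) / qFact q n := by
  rw [coeff_mul, Finset.Nat.sum_antidiagonal_eq_sum_range_succ_mk, Finset.sum_div]
  refine Finset.sum_congr rfl fun k hk => ?_
  have hk' : k ≤ n := Nat.lt_succ_iff.mp (Finset.mem_range.mp hk)
  simp only [qGen, qExp, coeff_mk, one_pow, mul_one]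
  rw [qBinom_eq hq1 hk']
  have h2 : (2:ℂ)^(n-k) ≠ 0 := pow_ne_zero _ two_ne_zero
  field_simp [qFact_ne hq1]

lemma coeff_expmul {q : ℂ} (hq1 : ‖q‖ < 1) (x y : ℂ) (n : ℕ) :
    coeff n (qExp q x * qExp q y) = qAdd q x y n / qFact q n := by
  rw [coeff_mul, Finset.Nat.sum_antidiagonal_eq_sum_range_succ_mk, qAdd, Finset.sum_div]
  refine Finset.sum_congr rfl fun k hk => ?_
  have hk' : k ≤ n := Nat.lt_succ_iff.mp (Finset.mem_range.mp hk)
  simp only [qExp, coeff_mk]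
  rw [qBinom_eq hq1 hk',
    show (2:ℂ)^n = 2^k * 2^(n-k) by rw [← pow_add, Nat.add_sub_cancel' hk']]
  have h2 : (2:ℂ)^k ≠ 0 := pow_ne_zero _ two_ne_zero
  have h3 : (2:ℂ)^(n-k) ≠ 0 := pow_ne_zero _ two_ne_zero
  field_simp [qFact_ne hq1]

/-- Two-variable difference equations for the `q`-Bernoulli, `q`-Euler and `q`-Genocchi
polynomials. -/
theorem two_variable_difference_equations (q : ℂ)
    (hq0 : 0 < ‖q‖) (hq1 : ‖q‖ < 1)
    (B E G : ℂ → ℂ → ℕ → ℂ)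
    (hB : ∀ x y : ℂ, qGen q (B x y) * (qExp q 1 - 1) = PowerSeries.X * qExp q x * qExp q y)
    (hE : ∀ x y : ℂ, qGen q (E x y) * (qExp q 1 + 1) = 2 * qExp q x * qExp q y)
    (hG : ∀ x y : ℂ, qGen q (G x y) * (qExp q 1 + 1) = 2 * PowerSeries.X * qExp q x * qExp q y)
    (n : ℕ) (hn : 1 ≤ n) (x y : ℂ) :
    ((∑ k ∈ Finset.range (n + 1),
        qBinom q n k * (qShift (-1) q (n - k) / 2 ^ (n - k)) * B x y k) - B x y n
      = qNum q n * qAdd q x y (n - 1)) ∧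
    ((∑ k ∈ Finset.range (n + 1),
        qBinom q n k * (qShift (-1) q (n - k) / 2 ^ (n - k)) * E x y k) + E x y n
      = 2 * qAdd q x y n) ∧
    ((∑ k ∈ Finset.range (n + 1),
        qBinom q n k * (qShift (-1) q (n - k) / 2 ^ (n - k)) * G x y k) + G x y n
      = 2 * qNum q n * qAdd q x y (n - 1)) := by
  obtain ⟨m, rfl⟩ : ∃ m, n = m + 1 := ⟨n - 1, (Nat.succ_pred_eq_of_pos hn).symm⟩
  simp only [Nat.add_sub_cancel]
  have hfm := qFact_ne hq1 m
  have hfm1 := qFact_ne hq1 (m + 1)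
  have hfsucc : qFact q (m + 1) = qNum q (m + 1) * qFact q m := rfl
  constructor
  · -- Bernoulli
    have h := congrArg (coeff (m + 1)) (hB x y)
    rw [mul_sub, mul_one, map_sub, coeff_genmul hq1, mul_assoc, coeff_succ_X_mul,
      coeff_expmul hq1] at h
    have hc : coeff (m + 1) (qGen q (B x y)) = B x y (m + 1) / qFact q (m + 1) := by
      simp [qGen]
    rw [hc] at h
    calc _ = qFact q (m + 1) *
          ((∑ k ∈ Finset.range (m + 1 + 1),
            qBinom q (m+1) k * (qShift (-1) q (m+1-k) / 2^(m+1-k)) * B x y k) / qFact q (m+1)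
            - B x y (m + 1) / qFact q (m + 1)) := by field_simp
      _ = qFact q (m + 1) * (qAdd q x y m / qFact q m) := by rw [h]
      _ = qNum q (m + 1) * qAdd q x y m := by rw [hfsucc]; field_simp
  constructor
  · -- Euler
    have h := congrArg (coeff (m + 1)) (hE x y)
    rw [mul_add, mul_one, map_add, coeff_genmul hq1, two_mul, add_mul,
      map_add, coeff_expmul hq1] at h
    have hc : coeff (m + 1) (qGen q (E x y)) = E x y (m + 1) / qFact q (m + 1) := by
      simp [qGen]
    rw [hc] at h
    calc _ = qFact q (m + 1) *
          ((∑ k ∈ Finset.range (m + 1 + 1),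
            qBinom q (m+1) k * (qShift (-1) q (m+1-k) / 2^(m+1-k)) * E x y k) / qFact q (m+1)
            + E x y (m + 1) / qFact q (m + 1)) := by field_simp
      _ = qFact q (m + 1) *
            (qAdd q x y (m+1) / qFact q (m+1) + qAdd q x y (m+1) / qFact q (m+1)) := by rw [h]
      _ = 2 * qAdd q x y (m + 1) := by field_simp; ring
  · -- Genocchi
    have h := congrArg (coeff (m + 1)) (hG x y)
    rw [mul_add, mul_one, map_add, coeff_genmul hq1, two_mul, add_mul, add_mul,
      map_add, mul_assoc, coeff_succ_X_mul, coeff_expmul hq1] at h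
    have hc : coeff (m + 1) (qGen q (G x y)) = G x y (m + 1) / qFact q (m + 1) := by
      simp [qGen]
    rw [hc] at h
    calc _ = qFact q (m + 1) *
          ((∑ k ∈ Finset.range (m + 1 + 1),
            qBinom q (m+1) k * (qShift (-1) q (m+1-k) / 2^(m+1-k)) * G x y k) / qFact q (m+1)
            + G x y (m + 1) / qFact q (m + 1)) := by field_simp
      _ = qFact q (m + 1) * (qAdd q x y m / qFact q m + qAdd q x y m / qFact q m) := by rw [h]
      _ = 2 * qNum q (m + 1) * qAdd q x y m := by rw [hfsucc]; field_simp; ring
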